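/- Suppose β₃ ≠ 0 and γ - 2β₃² ≠ 0. Then there exist A,B,D ∈ ℂ with AD ≠ 0 such that under the transformation β₃' = (D/A²)β₃, β₄' = (D/A³)(β₄ + B(γ - 2β₃²)/A), γ' = (D²/A⁴)γ, one gets β₃' = 1, β₄' = 0, γ' = γ/β₃². Hence every algebra in U₁ ⊂ SLeib₅ is isomorphic to L(1,0,λ) with λ = γ/β₃². -/

import Mathlib

/-- Every algebra of `U₁ ⊂ SLeib₅` (i.e. `β₃ ≠ 0`, `γ - 2β₃² ≠ 0`) can be
brought by an adapted transformation to the form `L(1,0,λ)` with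
`λ = γ/β₃²`. -/
theorem U1_normal_form_SLeib5 (b3 b4 g : ℂ) (hb3 : b3 ≠ 0)
    (hg : g - 2 * b3 ^ 2 ≠ 0) :
    ∃ A B D : ℂ, A * D ≠ 0 ∧
      D / A ^ 2 * b3 = 1 ∧
      D / A ^ 3 * (b4 + B * (g - 2 * b3 ^ 2) / A) = 0 ∧
      D ^ 2 / A ^ 4 * g = g / b3 ^ 2 := by
  refine ⟨1, -b4 / (g - 2 * b3 ^ 2), 1 / b3, ?_, ?_, ?_, ?_⟩
  · simpa using hb3
  · field_simp
  · field_simp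
    rw [div_self (by rwa [mul_comm] : g - b3 ^ 2 * 2 ≠ 0)]; ring
  · field_simp
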